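/- Let X be a Fitting group (every element lies in a nilpotent normal subgroup of X, equivalently every normal closure of a single element is nilpotent). If N is a nilpotent subgroup of X that is normal and of finite index in a subgroup K of X, then K is nilpotent. -/

import Mathlib

def IsFittingGroup (G : Type*) [Group G] : Prop :=
  ∀ x : G, Group.IsNilpotent (Subgroup.normalClosure ({x} : Set G))

section FittingAux

open Subgroup
open scoped commutatorElement

variable {G : Type*} [Group G]

/-- If each element of a generating set commutes into `M` with `C`, then `⁅closure s, C⁆ ≤ M`,
provided `M` is normal. -/
private lemma commutator_closure_le {s : Set G} {C M : Subgroup G} [hM : M.Normal]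
    (h : ∀ g ∈ s, ∀ c ∈ C, ⁅g, c⁆ ∈ M) : ⁅Subgroup.closure s, C⁆ ≤ M := by
  rw [Subgroup.commutator_le]
  intro g hg
  refine closure_induction (p := fun g _ => ∀ c ∈ C, ⁅g, c⁆ ∈ M) h ?_ ?_ ?_ hg
  · intro c hc
    simpa using M.one_mem
  · intro x y _ _ hxc hyc c hc
    have hxy : ⁅x * y, c⁆ = x * ⁅y, c⁆ * x⁻¹ * ⁅x, c⁆ := by
      simp only [commutatorElement_def]; group
    rw [hxy]
    exact M.mul_mem (hM.conj_mem _ (hyc c hc) x) (hxc c hc)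
  · intro x _ hxc c hc
    have hxi : ⁅x⁻¹, c⁆ = x⁻¹ * ⁅x, c⁆⁻¹ * (x⁻¹)⁻¹ := by
      simp only [commutatorElement_def]; group
    rw [hxi]
    exact hM.conj_mem _ (M.inv_mem (hxc c hc)) x⁻¹

private lemma commutator_le_of_le_closure {A C M : Subgroup G} [M.Normal] {s : Set G}
    (hA : A ≤ Subgroup.closure s) (h : ∀ g ∈ s, ∀ c ∈ C, ⁅g, c⁆ ∈ M) : ⁅A, C⁆ ≤ M :=
  le_trans (Subgroup.commutator_mono hA le_rfl) (commutator_closure_le h)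

/-- The "ambient" lower central series of a subgroup. -/
private def aLCS (H : Subgroup G) : ℕ → Subgroup G
  | 0 => H
  | n + 1 => ⁅aLCS H n, H⁆

private lemma aLCS_eq_map (H : Subgroup G) :
    ∀ n, aLCS H n = (Subgroup.lowerCentralSeries (⊤ : Subgroup ↥H) n).map H.subtype
  | 0 => by
    show H = _
    rw [Subgroup.lowerCentralSeries_zero, ← MonoidHom.range_eq_map, H.range_subtype]
  | n + 1 => by
    show ⁅aLCS H n, H⁆ = _
    have h1 : Subgroup.lowerCentralSeries (⊤ : Subgroup ↥H) (n + 1) = ⁅Subgroup.lowerCentralSeries (⊤ : Subgroup ↥H) n, ⊤⁆ := rfl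
    rw [h1, Subgroup.map_commutator, ← aLCS_eq_map H n, ← MonoidHom.range_eq_map,
      H.range_subtype]

private instance aLCS_normal (H : Subgroup G) [hH : H.Normal] (n : ℕ) : (aLCS H n).Normal := by
  induction n with
  | zero => exact hH
  | succ n ih => exact @Subgroup.commutator_normal _ _ (aLCS H n) H ih hH

private lemma aLCS_eq_bot_of_nilpotent (H : Subgroup G) (h : Group.IsNilpotent H) :
    ∃ n, aLCS H n = ⊥ := by
  obtain ⟨n, hn⟩ := Subgroup.nilpotent_iff_lowerCentralSeries.mp h
  exact ⟨n, by rw [aLCS_eq_map, hn, Subgroup.map_bot]⟩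

private lemma nilpotent_of_aLCS_eq_bot (H : Subgroup G) {n : ℕ} (h : aLCS H n = ⊥) :
    Group.IsNilpotent H := by
  rw [Subgroup.nilpotent_iff_lowerCentralSeries]
  refine ⟨n, ?_⟩
  have := aLCS_eq_map H n
  rw [h] at this
  exact ((Subgroup.map_eq_bot_iff_of_injective _ H.subtype_injective).mp this.symm)

private lemma aLCS_eq_bot_of_le (H : Subgroup G) {c : ℕ} (h : aLCS H c = ⊥) :
    ∀ i, c ≤ i → aLCS H i = ⊥ := by
  intro i hi
  induction i with
  | zero => simpa [Nat.le_zero.mp hi] using h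
  | succ i ih =>
    rcases Nat.lt_or_ge c (i + 1) with hc | hc
    · have : aLCS H i = ⊥ := ih (Nat.lt_succ_iff.mp hc)
      show ⁅aLCS H i, H⁆ = ⊥
      rw [this, Subgroup.commutator_bot_left]
    · have : c = i + 1 := le_antisymm hi hc
      rw [← this]; exact h

/-- Padded ambient lower central series: `padLCS H 0 = ⊤`, `padLCS H (i+1) = aLCS H i`. -/
private def padLCS (H : Subgroup G) : ℕ → Subgroup G
  | 0 => ⊤
  | i + 1 => aLCS H i

private instance padLCS_normal (H : Subgroup G) [H.Normal] (i : ℕ) : (padLCS H i).Normal := by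
  cases i with
  | zero => show (⊤ : Subgroup G).Normal; infer_instance
  | succ i => exact aLCS_normal H i

private lemma commutator_padLCS_le (H : Subgroup G) [hH : H.Normal] (i : ℕ) :
    ⁅padLCS H i, H⁆ ≤ padLCS H (i + 1) := by
  cases i with
  | zero => exact Subgroup.commutator_le_right ⊤ H
  | succ i => exact le_of_eq rfl

private lemma normal_iSup' {ι : Sort*} (f : ι → Subgroup G) (h : ∀ i, (f i).Normal) :
    (⨆ i, f i).Normal := by
  constructor
  intro x hx g
  have hle : (⨆ i, f i) ≤ Subgroup.comap (MulAut.conj g).toMonoidHom (⨆ i, f i) := by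
    refine iSup_le fun i => le_trans ?_ (Subgroup.comap_mono (le_iSup f i))
    intro y hy
    rw [Subgroup.mem_comap]
    simpa using (h i).conj_mem y hy g
  simpa using hle hx

private def fitD (H K : Subgroup G) (n : ℕ) : Subgroup G :=
  ⨆ p : {p : ℕ × ℕ // p.1 + p.2 = n + 1}, padLCS H p.1.1 ⊓ padLCS K p.1.2

/-- Fitting's theorem: the join of two nilpotent normal subgroups is nilpotent. -/
private lemma fitting_sup (H K : Subgroup G) [hHn : H.Normal] [hKn : K.Normal]
    (hH : Group.IsNilpotent H) (hK : Group.IsNilpotent K) :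
    Group.IsNilpotent ↥(H ⊔ K) := by
  obtain ⟨c, hc⟩ := aLCS_eq_bot_of_nilpotent H hH
  obtain ⟨d, hd⟩ := aLCS_eq_bot_of_nilpotent K hK
  have hDnormal : ∀ n, (fitD H K n).Normal := by
    intro n
    refine normal_iSup' _ fun p => Subgroup.normal_inf_normal _ _
  -- the inductive claim
  have key : ∀ n, aLCS (H ⊔ K) n ≤ fitD H K n := by
    intro n
    induction n with
    | zero =>
      show H ⊔ K ≤ fitD H K 0
      apply sup_le
      · exact le_trans (le_inf (le_of_eq rfl) le_top)
          (le_iSup_of_le ⟨(1, 0), by omega⟩ le_rfl)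
      · exact le_trans (le_inf le_top (le_of_eq rfl))
          (le_iSup_of_le ⟨(0, 1), by omega⟩ le_rfl)
    | succ n ih =>
      show ⁅aLCS (H ⊔ K) n, H ⊔ K⁆ ≤ fitD H K (n + 1)
      haveI := hDnormal (n + 1)
      have step : ∀ (L : Subgroup G), L.Normal →
          (∀ p : ℕ × ℕ, p.1 + p.2 = n + 1 →
            ⁅padLCS H p.1 ⊓ padLCS K p.2, L⁆ ≤ fitD H K (n + 1)) →
          ⁅fitD H K n, L⁆ ≤ fitD H K (n + 1) := by
        intro L _ hterm
        have hcl : fitD H K n ≤ Subgroup.closure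
            (⋃ p : {p : ℕ × ℕ // p.1 + p.2 = n + 1},
              ((padLCS H p.1.1 ⊓ padLCS K p.1.2 : Subgroup G) : Set G)) :=
          le_of_eq (Subgroup.iSup_eq_closure _)
        refine commutator_le_of_le_closure hcl ?_
        intro g hg cc hcc
        obtain ⟨S, ⟨p, rfl⟩, hgS⟩ := hg
        exact (Subgroup.commutator_le.mp (hterm p.1 p.2)) g hgS cc hcc
      have hDH : ⁅fitD H K n, H⁆ ≤ fitD H K (n + 1) := by
        refine step H hHn ?_
        intro p hp
        haveI : (padLCS H p.1 ⊓ padLCS K p.2).Normal := Subgroup.normal_inf_normal _ _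
        refine le_trans (le_inf ?_ ?_) (le_iSup_of_le ⟨(p.1 + 1, p.2), by omega⟩ le_rfl)
        · exact le_trans (Subgroup.commutator_mono inf_le_left le_rfl)
            (commutator_padLCS_le H p.1)
        · exact le_trans (Subgroup.commutator_le_left _ _) inf_le_right
      have hDK : ⁅fitD H K n, K⁆ ≤ fitD H K (n + 1) := by
        refine step K hKn ?_
        intro p hp
        haveI : (padLCS H p.1 ⊓ padLCS K p.2).Normal := Subgroup.normal_inf_normal _ _
        refine le_trans (le_inf ?_ ?_) (le_iSup_of_le ⟨(p.1, p.2 + 1), by omega⟩ le_rfl)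
        · exact le_trans (Subgroup.commutator_le_left _ _) inf_le_left
        · exact le_trans (Subgroup.commutator_mono inf_le_right le_rfl)
            (commutator_padLCS_le K p.2)
      calc ⁅aLCS (H ⊔ K) n, H ⊔ K⁆ = ⁅H ⊔ K, aLCS (H ⊔ K) n⁆ :=
            Subgroup.commutator_comm _ _
        _ ≤ fitD H K (n + 1) := by
            refine commutator_le_of_le_closure (le_of_eq (Subgroup.sup_eq_closure H K)) ?_
            intro g hg cc hcc
            have hc' : cc ∈ fitD H K n := ih hcc
            have hcg : ⁅g, cc⁆ = ⁅cc, g⁆⁻¹ := (commutatorElement_inv cc g).symm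
            rcases hg with hg | hg
            · rw [hcg]
              exact Subgroup.inv_mem _ (Subgroup.commutator_le.mp hDH cc hc' g hg)
            · rw [hcg]
              exact Subgroup.inv_mem _ (Subgroup.commutator_le.mp hDK cc hc' g hg)
  -- conclude: fitD H K (c + d) = ⊥
  have hbot : fitD H K (c + d) = ⊥ := by
    rw [eq_bot_iff]
    refine iSup_le fun p => ?_
    have hp := p.2
    rcases Nat.lt_or_ge p.1.1 (c + 1) with h1 | h1
    · have h2 : d + 1 ≤ p.1.2 := by omega
      have hb : padLCS K p.1.2 = ⊥ := by
        cases hj : p.1.2 with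
        | zero => omega
        | succ j => exact aLCS_eq_bot_of_le K hd j (by omega)
      rw [hb]
      exact inf_le_right
    · have hb : padLCS H p.1.1 = ⊥ := by
        cases hi : p.1.1 with
        | zero => omega
        | succ i => exact aLCS_eq_bot_of_le H hc i (by omega)
      rw [hb]
      exact inf_le_left
  exact nilpotent_of_aLCS_eq_bot (H ⊔ K) (le_bot_iff.mp (hbot ▸ key (c + d)))

/-- Fitting's theorem for finitely many nilpotent normal subgroups. -/
private lemma fitting_finset {ι : Type*} (s : Finset ι) (f : ι → Subgroup G)
    (hn : ∀ i, (f i).Normal) (hnil : ∀ i, Group.IsNilpotent (f i)) :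
    Group.IsNilpotent ↥(⨆ i ∈ s, f i) ∧ (⨆ i ∈ s, f i).Normal := by
  classical
  induction s using Finset.induction_on with
  | empty =>
    have hb : (⨆ i ∈ (∅ : Finset ι), f i) = ⊥ := by simp
    rw [hb]
    exact ⟨Group.isNilpotent_of_subsingleton, inferInstance⟩
  | @insert a s ha ih =>
    rw [Finset.iSup_insert]
    obtain ⟨ihnil, ihnorm⟩ := ih
    haveI := hn a
    haveI := ihnorm
    exact ⟨fitting_sup (f a) (⨆ i ∈ s, f i) (hnil a) ihnil, inferInstance⟩

end FittingAux

/-- In a Fitting group, a subgroup with a nilpotent normal subgroup of finite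
index is nilpotent. -/
theorem stmt_2 {X : Type*} [Group X] (hX : IsFittingGroup X)
    (N K : Subgroup X) (hNK : N ≤ K)
    (hNnil : Group.IsNilpotent N)
    (hNnorm : (N.subgroupOf K).Normal)
    (hNfin : (N.subgroupOf K).FiniteIndex) :
    Group.IsNilpotent K := by
  classical
  haveI := hNnorm
  haveI := hNfin
  -- nilpotency of subgroupOf for nilpotent ambient subgroup
  have subgroupOf_nilpotent : ∀ (M : Subgroup X), Group.IsNilpotent M →
      Group.IsNilpotent ↥(M.subgroupOf K) := by
    intro M hM
    haveI : Group.IsNilpotent ↥M := hM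
    have h1 : M.subgroupOf K = (M ⊓ K).subgroupOf K := (Subgroup.inf_subgroupOf_right M K).symm
    rw [h1]
    have e1 := Subgroup.subgroupOfEquivOfLe (inf_le_right : M ⊓ K ≤ K)
    have e2 := Subgroup.subgroupOfEquivOfLe (inf_le_left : M ⊓ K ≤ M)
    have h2 : Group.IsNilpotent ↥((M ⊓ K).subgroupOf M) := inferInstance
    have h3 : Group.IsNilpotent ↥(M ⊓ K) := (Group.isNilpotent_congr e2).mp h2
    exact (Group.isNilpotent_congr e1).mpr h3
  -- quotient is finite
  haveI : Finite (↥K ⧸ N.subgroupOf K) := Subgroup.finite_quotient_of_finiteIndex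
  haveI : Fintype (↥K ⧸ N.subgroupOf K) := Fintype.ofFinite _
  -- family of nilpotent normal subgroups of K
  let f : Option (↥K ⧸ N.subgroupOf K) → Subgroup ↥K := fun o =>
    match o with
    | none => N.subgroupOf K
    | some q => (Subgroup.normalClosure ({(q.out : X)} : Set X)).subgroupOf K
  have hfnormal : ∀ o, (f o).Normal := by
    rintro (_ | q)
    · exact hNnorm
    · exact Subgroup.normal_subgroupOf
  have hfnil : ∀ o, Group.IsNilpotent (f o) := by
    rintro (_ | q)
    · exact (Group.isNilpotent_congr (Subgroup.subgroupOfEquivOfLe hNK)).mpr hNnil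
    · exact subgroupOf_nilpotent _ (hX _)
  obtain ⟨hnil, -⟩ := fitting_finset Finset.univ f hfnormal hfnil
  have htop : (⨆ o ∈ Finset.univ, f o) = (⊤ : Subgroup ↥K) := by
    rw [eq_top_iff]
    intro k _
    set q : ↥K ⧸ N.subgroupOf K := QuotientGroup.mk k with hq
    have hout : (QuotientGroup.mk q.out : ↥K ⧸ N.subgroupOf K) = QuotientGroup.mk k := by
      rw [hq]; exact Quotient.out_eq' _
    have hmem : q.out⁻¹ * k ∈ N.subgroupOf K := (QuotientGroup.eq ).mp hout
    have h1 : q.out ∈ f (some q) := by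
      show (q.out : X) ∈ Subgroup.normalClosure ({(q.out : X)} : Set X)
      exact Subgroup.subset_normalClosure rfl
    have h2 : q.out ∈ ⨆ o ∈ Finset.univ, f o :=
      Subgroup.mem_iSup_of_mem (some q) (Subgroup.mem_iSup_of_mem (Finset.mem_univ _) h1)
    have h3 : q.out⁻¹ * k ∈ ⨆ o ∈ Finset.univ, f o :=
      Subgroup.mem_iSup_of_mem none (Subgroup.mem_iSup_of_mem (Finset.mem_univ _) hmem)
    have : k = q.out * (q.out⁻¹ * k) := by group
    rw [this]
    exact Subgroup.mul_mem _ h2 h3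
  rw [htop] at hnil
  exact Group.isNilpotent_top.mp hnil
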